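/- Adams consensus commutes with restriction to its own clusters: if Y is a cluster of φ_Ad(P) for a profile P of rooted phylogenetic trees on X, then φ_Ad(P)|_Y = φ_Ad(P|_Y). Consequently Adams consensus satisfies extension stability for clusters (I). -/

import Mathlib

/-- A (candidate) rooted phylogenetic tree, encoded by its set of clusters. -/
abbrev PTree : Type := Finset (Finset ℕ)

/-- Two clusters are nested: disjoint or one contained in the other. -/
abbrev Nested (C D : Finset ℕ) : Prop := C ∩ D = ∅ ∨ C ⊆ D ∨ D ⊆ C

/-- `H` is a hierarchy on leaf set `X`: a rooted phylogenetic tree in `RP(X)`. -/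
structure IsHierarchy (X : Finset ℕ) (H : PTree) : Prop where
  subset_top : ∀ C ∈ H, C ⊆ X
  cluster_nonempty : ∀ C ∈ H, C.Nonempty
  top_mem : X ∈ H
  singleton_mem : ∀ x ∈ X, ({x} : Finset ℕ) ∈ H
  laminar : ∀ C ∈ H, ∀ D ∈ H, Nested C D

/-- Restriction `T|_Y` of a tree to a subset `Y` of the leaves. -/
def restrictT (H : PTree) (Y : Finset ℕ) : PTree :=
  (H.image (fun C => C ∩ Y)).filter (fun C => C.Nonempty)

/-- The maximal proper clusters of a tree on leaf set `X`. -/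
def maxProper (X : Finset ℕ) (T : PTree) : PTree :=
  T.filter (fun C => C ≠ X ∧ ∀ D ∈ T, C ⊂ D → D = X)

/-- Common refinement of two collections of blocks. -/
def meet2 (π π' : Finset (Finset ℕ)) : Finset (Finset ℕ) :=
  ((π ×ˢ π').image (fun p => p.1 ∩ p.2)).filter (fun B => B.Nonempty)

/-- Common refinement of a list of collections of blocks. -/
def meetAll : List (Finset (Finset ℕ)) → Finset (Finset ℕ)
  | [] => ∅
  | π :: L => L.foldl meet2 π

/-- Adams consensus, with fuel: the maximal proper clusters of the output are
the nonempty intersections of one maximal proper cluster from each input tree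
(the common refinement of the top partitions), and the construction recurses on
each such block with the restricted profile. -/
def adamsAux : ℕ → Finset ℕ → List PTree → PTree
  | 0, X, _ => {X}
  | n + 1, X, P =>
      let B := (meetAll (P.map (maxProper X))).filter (fun A => A ⊂ X)
      insert X (B.biUnion (fun A => adamsAux n A (P.map (fun T => restrictT T A))))

/-- Adams consensus of a profile of trees on leaf set `X`. -/
def adams (X : Finset ℕ) (P : List PTree) : PTree := adamsAux X.card X P

/-! ### Auxiliary lemmas -/

open Finset

/-- The blocks used at the top level of the Adams recursion. -/
def blocks (X : Finset ℕ) (P : List PTree) : Finset (Finset ℕ) :=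
  (meetAll (P.map (maxProper X))).filter (fun A => A ⊂ X)

lemma adamsAux_succ (n : ℕ) (X : Finset ℕ) (P : List PTree) :
    adamsAux (n + 1) X P =
      insert X ((blocks X P).biUnion
        (fun A => adamsAux n A (P.map (fun T => restrictT T A)))) := rfl

lemma mem_restrictT {H : PTree} {Y D : Finset ℕ} :
    D ∈ restrictT H Y ↔ (∃ C ∈ H, C ∩ Y = D) ∧ D.Nonempty := by
  simp [restrictT]

lemma restrictT_mono {H H' : PTree} (Y : Finset ℕ) (h : H ⊆ H') :
    restrictT H Y ⊆ restrictT H' Y := by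
  intro D hD
  rw [mem_restrictT] at hD ⊢
  obtain ⟨⟨C, hC, hCD⟩, hne⟩ := hD
  exact ⟨⟨C, h hC, hCD⟩, hne⟩

lemma restrictT_self {H : PTree} {X : Finset ℕ}
    (h1 : ∀ C ∈ H, C ⊆ X) (h2 : ∀ C ∈ H, C.Nonempty) :
    restrictT H X = H := by
  ext D
  rw [mem_restrictT]
  constructor
  · rintro ⟨⟨C, hC, rfl⟩, hne⟩
    rwa [Finset.inter_eq_left.mpr (h1 C hC)]
  · intro hD
    exact ⟨⟨D, hD, Finset.inter_eq_left.mpr (h1 D hD)⟩, h2 D hD⟩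

lemma restrictT_restrictT {T : PTree} {A Y : Finset ℕ} (hYA : Y ⊆ A) :
    restrictT (restrictT T A) Y = restrictT T Y := by
  ext D
  rw [mem_restrictT, mem_restrictT]
  constructor
  · rintro ⟨⟨C, hC, rfl⟩, hne⟩
    rw [mem_restrictT] at hC
    obtain ⟨⟨C', hC', rfl⟩, _⟩ := hC
    refine ⟨⟨C', hC', ?_⟩, hne⟩
    rw [Finset.inter_assoc, Finset.inter_eq_right.mpr hYA]
  · rintro ⟨⟨C, hC, rfl⟩, hne⟩
    refine ⟨⟨C ∩ A, ?_, ?_⟩, hne⟩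
    · rw [mem_restrictT]
      refine ⟨⟨C, hC, rfl⟩, ?_⟩
      obtain ⟨x, hx⟩ := hne
      exact ⟨x, Finset.mem_inter.mpr ⟨(Finset.mem_inter.mp hx).1,
        hYA (Finset.mem_inter.mp hx).2⟩⟩
    · rw [Finset.inter_assoc, Finset.inter_eq_right.mpr hYA]

lemma isHierarchy_restrict {X A : Finset ℕ} {T : PTree}
    (h : IsHierarchy X T) (hA : A ⊆ X) (hAne : A.Nonempty) :
    IsHierarchy A (restrictT T A) := by
  constructor
  · intro C hC
    rw [mem_restrictT] at hC
    obtain ⟨⟨C', _, rfl⟩, _⟩ := hC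
    exact Finset.inter_subset_right
  · intro C hC
    rw [mem_restrictT] at hC
    exact hC.2
  · rw [mem_restrictT]
    exact ⟨⟨X, h.top_mem, Finset.inter_eq_right.mpr hA⟩, hAne⟩
  · intro x hx
    rw [mem_restrictT]
    refine ⟨⟨{x}, h.singleton_mem x (hA hx), ?_⟩, Finset.singleton_nonempty x⟩
    rw [Finset.inter_eq_left]
    simpa using hx
  · intro C hC D hD
    rw [mem_restrictT] at hC hD
    obtain ⟨⟨C', hC', rfl⟩, _⟩ := hC
    obtain ⟨⟨D', hD', rfl⟩, _⟩ := hD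
    rcases h.laminar C' hC' D' hD' with h1 | h2 | h3
    · left
      rw [← Finset.subset_empty, ← h1]
      intro x hx
      simp only [Finset.mem_inter] at hx ⊢
      exact ⟨hx.1.1, hx.2.1⟩
    · right; left; exact Finset.inter_subset_inter h2 (le_refl A)
    · right; right; exact Finset.inter_subset_inter h3 (le_refl A)

/-- Pairwise disjointness of a collection of distinct blocks. -/
def PD (π : Finset (Finset ℕ)) : Prop :=
  ∀ B ∈ π, ∀ B' ∈ π, B ≠ B' → B ∩ B' = ∅

lemma PD_meet2 {π π' : Finset (Finset ℕ)} (h : PD π) (h' : PD π') :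
    PD (meet2 π π') := by
  intro B hB B' hB' hne
  simp only [meet2, Finset.mem_filter, Finset.mem_image, Finset.mem_product] at hB hB'
  obtain ⟨⟨⟨p1, p2⟩, ⟨hp1, hp2⟩, rfl⟩, _⟩ := hB
  obtain ⟨⟨⟨q1, q2⟩, ⟨hq1, hq2⟩, rfl⟩, _⟩ := hB'
  by_cases h1 : p1 = q1
  · by_cases h2 : p2 = q2
    · exact absurd (by rw [h1, h2]) hne
    · rw [← Finset.subset_empty, ← h' p2 hp2 q2 hq2 h2]
      intro x hx
      simp only [Finset.mem_inter] at hx ⊢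
      exact ⟨hx.1.2, hx.2.2⟩
  · rw [← Finset.subset_empty, ← h p1 hp1 q1 hq1 h1]
    intro x hx
    simp only [Finset.mem_inter] at hx ⊢
    exact ⟨hx.1.1, hx.2.1⟩

lemma PD_foldl {L : List (Finset (Finset ℕ))} :
    ∀ {π : Finset (Finset ℕ)}, PD π → (∀ π' ∈ L, PD π') → PD (L.foldl meet2 π) := by
  induction L with
  | nil => intro π h _; exact h
  | cons π' L ih =>
      intro π h hL
      simp only [List.foldl_cons]
      exact ih (PD_meet2 h (hL π' List.mem_cons_self))
        (fun p hp => hL p (List.mem_cons_of_mem _ hp))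

lemma PD_maxProper {X : Finset ℕ} {T : PTree} (h : IsHierarchy X T) :
    PD (maxProper X T) := by
  intro B hB B' hB' hne
  simp only [maxProper, Finset.mem_filter] at hB hB'
  obtain ⟨hBT, hBne, hBmax⟩ := hB
  obtain ⟨hB'T, hB'ne, hB'max⟩ := hB'
  rcases h.laminar B hBT B' hB'T with h1 | h2 | h3
  · exact h1
  · exact absurd (hBmax B' hB'T (lt_of_le_of_ne h2 hne)) hB'ne
  · exact absurd (hB'max B hBT (lt_of_le_of_ne h3 (Ne.symm hne))) hBne

lemma blocks_PD {X : Finset ℕ} {P : List PTree}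
    (hh : ∀ T ∈ P, IsHierarchy X T) : PD (blocks X P) := by
  have hmeet : PD (meetAll (P.map (maxProper X))) := by
    cases P with
    | nil => intro B hB; simp [meetAll] at hB
    | cons T L =>
        simp only [List.map_cons, meetAll]
        refine PD_foldl (PD_maxProper (hh T List.mem_cons_self)) ?_
        intro π' hπ'
        obtain ⟨T', hT', rfl⟩ := List.mem_map.mp hπ'
        exact PD_maxProper (hh T' (List.mem_cons_of_mem _ hT'))
  intro B hB B' hB' hne
  rw [blocks, Finset.mem_filter] at hB hB'
  exact hmeet B hB.1 B' hB'.1 hne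

lemma foldl_meet2_nonempty {L : List (Finset (Finset ℕ))} :
    ∀ {π : Finset (Finset ℕ)}, (∀ B ∈ π, B.Nonempty) →
      ∀ B ∈ L.foldl meet2 π, B.Nonempty := by
  induction L with
  | nil => intro π h; exact h
  | cons π' L ih =>
      intro π h
      simp only [List.foldl_cons]
      refine ih ?_
      intro B hB
      simp only [meet2, Finset.mem_filter] at hB
      exact hB.2

lemma blocks_nonempty {X : Finset ℕ} {P : List PTree}
    (hh : ∀ T ∈ P, IsHierarchy X T) : ∀ A ∈ blocks X P, A.Nonempty := by
  intro A hA
  rw [blocks, Finset.mem_filter] at hA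
  cases P with
  | nil => simp [meetAll] at hA
  | cons T L =>
      simp only [List.map_cons, meetAll] at hA
      refine foldl_meet2_nonempty ?_ A hA.1
      intro B hB
      simp only [maxProper, Finset.mem_filter] at hB
      exact (hh T List.mem_cons_self).cluster_nonempty B hB.1

lemma adamsAux_subset : ∀ (n : ℕ) (X : Finset ℕ) (P : List PTree),
    ∀ C ∈ adamsAux n X P, C ⊆ X := by
  intro n
  induction n with
  | zero =>
      intro X P C hC
      rw [show adamsAux 0 X P = {X} from rfl, Finset.mem_singleton] at hC
      subst hC
      exact subset_refl _
  | succ n ih =>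
      intro X P C hC
      rw [adamsAux_succ, Finset.mem_insert] at hC
      rcases hC with rfl | hC
      · exact subset_refl _
      · obtain ⟨A, hA, hCA⟩ := Finset.mem_biUnion.mp hC
        rw [blocks, Finset.mem_filter] at hA
        exact (ih A _ C hCA).trans hA.2.subset

lemma adamsAux_top (n : ℕ) (X : Finset ℕ) (P : List PTree) :
    X ∈ adamsAux n X P := by
  cases n with
  | zero => simp [adamsAux]
  | succ n => rw [adamsAux_succ]; exact Finset.mem_insert_self _ _

lemma adamsAux_nonempty : ∀ (n : ℕ) (X : Finset ℕ) (P : List PTree),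
    X.Nonempty → (∀ T ∈ P, IsHierarchy X T) →
      ∀ C ∈ adamsAux n X P, C.Nonempty := by
  intro n
  induction n with
  | zero =>
      intro X P hX _ C hC
      rw [show adamsAux 0 X P = {X} from rfl, Finset.mem_singleton] at hC
      subst hC
      exact hX
  | succ n ih =>
      intro X P hX hh C hC
      rw [adamsAux_succ, Finset.mem_insert] at hC
      rcases hC with rfl | hC
      · exact hX
      · obtain ⟨A, hA, hCA⟩ := Finset.mem_biUnion.mp hC
        have hAne := blocks_nonempty hh A hA
        have hAX : A ⊆ X := by
          rw [blocks, Finset.mem_filter] at hA; exact hA.2.subset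
        refine ih A _ hAne ?_ C hCA
        intro T' hT'
        obtain ⟨T, hT, rfl⟩ := List.mem_map.mp hT'
        exact isHierarchy_restrict (hh T hT) hAX hAne

lemma adamsAux_empty : ∀ (n : ℕ) (P : List PTree), adamsAux n ∅ P = {∅} := by
  intro n P
  cases n with
  | zero => rfl
  | succ n =>
      rw [adamsAux_succ]
      have : blocks ∅ P = ∅ := by
        rw [blocks]
        refine Finset.filter_eq_empty_iff.mpr ?_
        intro A _ hA
        exact Finset.not_ssubset_empty A hA
      rw [this]
      simp

lemma adamsAux_fuel : ∀ (n m : ℕ) (X : Finset ℕ) (P : List PTree),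
    X.card ≤ n → X.card ≤ m → adamsAux n X P = adamsAux m X P := by
  intro n
  induction n with
  | zero =>
      intro m X P hn _
      have hX : X = ∅ := Finset.card_eq_zero.mp (Nat.le_zero.mp hn)
      subst hX
      rw [adamsAux_empty, adamsAux_empty]
  | succ n ih =>
      intro m X P hn hm
      by_cases hX : X = ∅
      · subst hX; rw [adamsAux_empty, adamsAux_empty]
      · have hcard : 1 ≤ X.card := Finset.card_pos.mpr (Finset.nonempty_of_ne_empty hX)
        obtain ⟨m', rfl⟩ : ∃ m', m = m' + 1 := by
          cases m with
          | zero => omega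
          | succ m' => exact ⟨m', rfl⟩
        rw [adamsAux_succ, adamsAux_succ]
        congr 1
        refine Finset.biUnion_congr rfl ?_
        intro A hA
        rw [blocks, Finset.mem_filter] at hA
        have hlt : A.card < X.card := Finset.card_lt_card hA.2
        exact ih m' A _ (by omega) (by omega)

/-- Main lemma: Adams consensus commutes with restriction to its own clusters. -/
lemma adams_restrict : ∀ (X : Finset ℕ) (P : List PTree),
    P ≠ [] → (∀ T ∈ P, IsHierarchy X T) →
    ∀ Y ∈ adams X P,
      restrictT (adams X P) Y = adams Y (P.map (fun T => restrictT T Y)) := by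
  intro X
  induction X using Finset.strongInduction with
  | _ X IH =>
    intro P hP hh Y hY
    obtain ⟨T₀, hT₀⟩ := List.exists_mem_of_ne_nil P hP
    have hX : X.Nonempty := (hh T₀ hT₀).cluster_nonempty X (hh T₀ hT₀).top_mem
    obtain ⟨m, hm⟩ : ∃ m, X.card = m + 1 := by
      have := Finset.card_pos.mpr hX
      exact ⟨X.card - 1, by omega⟩
    have hadams : adams X P = insert X ((blocks X P).biUnion
        (fun A => adamsAux m A (P.map (fun T => restrictT T A)))) := by
      rw [adams, hm, adamsAux_succ]
    rw [hadams, Finset.mem_insert] at hY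
    rcases hY with hYX | hY
    · -- Y = X
      subst hYX
      have h1 : restrictT (adams Y P) Y = adams Y P :=
        restrictT_self (adamsAux_subset _ _ _) (adamsAux_nonempty _ _ _ hX hh)
      have h2 : P.map (fun T => restrictT T Y) = P := by
        conv_rhs => rw [← List.map_id P]
        exact List.map_congr_left fun T hT =>
          restrictT_self ((hh T hT).subset_top) ((hh T hT).cluster_nonempty)
      rw [h2]
      exact h1
    · obtain ⟨A, hA, hYA⟩ := Finset.mem_biUnion.mp hY
      have hAblk := hA
      rw [blocks, Finset.mem_filter] at hA
      have hAX : A ⊂ X := hA.2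
      have hAne : A.Nonempty := blocks_nonempty hh A hAblk
      set PA := P.map (fun T => restrictT T A) with hPA
      have hhA : ∀ T' ∈ PA, IsHierarchy A T' := by
        intro T' hT'
        obtain ⟨T, hT, rfl⟩ := List.mem_map.mp hT'
        exact isHierarchy_restrict (hh T hT) hAX.subset hAne
      have hcardA : A.card ≤ m := by
        have := Finset.card_lt_card hAX; omega
      have hfuel : adamsAux m A PA = adams A PA :=
        adamsAux_fuel m A.card A PA hcardA (le_refl _)
      rw [hfuel] at hYA
      have hYsubA : Y ⊆ A := adamsAux_subset _ _ _ Y hYA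
      have hPAne : PA ≠ [] := by
        simp [hPA, hP]
      have hIH := IH A hAX PA hPAne hhA Y hYA
      have hmaps : PA.map (fun T => restrictT T Y) = P.map (fun T => restrictT T Y) := by
        rw [hPA, List.map_map]
        refine List.map_congr_left ?_
        intro T _
        exact restrictT_restrictT hYsubA
      rw [hmaps] at hIH
      rw [← hIH]
      -- show restrictT (adams X P) Y = restrictT (adams A PA) Y
      have hYne : Y.Nonempty := adamsAux_nonempty _ _ _ hAne hhA Y hYA
      apply Finset.Subset.antisymm
      · intro D hD
        rw [mem_restrictT] at hD ⊢
        obtain ⟨⟨C, hC, hCD⟩, hDne⟩ := hD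
        refine ⟨?_, hDne⟩
        rw [hadams, Finset.mem_insert] at hC
        rcases hC with rfl | hC
        · refine ⟨A, adamsAux_top _ _ _, ?_⟩
          rw [← hCD, Finset.inter_eq_right.mpr (hYsubA.trans hAX.subset),
            Finset.inter_eq_right.mpr hYsubA]
        · obtain ⟨A', hA', hCA'⟩ := Finset.mem_biUnion.mp hC
          by_cases hAA' : A' = A
          · subst hAA'
            rw [hfuel] at hCA'
            exact ⟨C, hCA', hCD⟩
          · exfalso
            have hCsub : C ⊆ A' := adamsAux_subset _ _ _ C hCA'
            have hdisj : A' ∩ A = ∅ := blocks_PD hh A' hA' A hAblk hAA'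
            obtain ⟨x, hx⟩ := hDne
            rw [← hCD] at hx
            have hx1 := (Finset.mem_inter.mp hx).1
            have hx2 := (Finset.mem_inter.mp hx).2
            have : x ∈ A' ∩ A := Finset.mem_inter.mpr ⟨hCsub hx1, hYsubA hx2⟩
            rw [hdisj] at this
            exact Finset.notMem_empty x this
      · refine restrictT_mono Y ?_
        rw [hadams, ← hfuel]
        exact (Finset.subset_biUnion_of_mem
          (fun A => adamsAux m A (P.map (fun T => restrictT T A))) hAblk).trans
          (Finset.subset_insert _ _)

/-- Adams consensus commutes with restriction to any cluster `Y` of its output;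
in particular `φ_Ad(P|_Y) ⪯ φ_Ad(P)|_Y` (extension stability for clusters (I)). -/
theorem adams_extension_stable_clusters_I (X : Finset ℕ) (P : List PTree)
    (hP : P ≠ []) (hh : ∀ T ∈ P, IsHierarchy X T)
    (Y : Finset ℕ) (hY : Y ∈ adams X P) :
    restrictT (adams X P) Y = adams Y (P.map (fun T => restrictT T Y)) ∧
      adams Y (P.map (fun T => restrictT T Y)) ⊆ restrictT (adams X P) Y := by
  have h := adams_restrict X P hP hh Y hY
  exact ⟨h, h ▸ Finset.Subset.refl _⟩
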